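/- arXiv:2103.14264 — 4 statements merged into one kernel-verified Lean document; each statement's English description precedes it below -/
import Mathlib

section
/- Let n, p ∈ ℕ, let A be a real n×n matrix, B a real n×p matrix, μ ∈ ℝ, and let M be a real symmetric n×n matrix. Define ψ : ℝⁿ × ℝⁿ × ℝ → ℝ by ψ(x, x̃, t) = (x−x̃)ᵀ M (x−x̃) · e^{μt}. If M is positive definite and AᵀM + MA + μM is negative semidefinite, then: (i) ψ(x, x̃, t) > 0 for all x ≠ x̃ and all t; (ii) ψ(x, x, t) = 0 for all x and all t; and (iii) for every x, x̃ ∈ ℝⁿ, t ∈ ℝ, and u ∈ ℝᵖ, the derivative at s = 0 of the function s ↦ ψ(x + s(Ax + Bu), x̃ + s(Ax̃ + Bu), t + s) is ≤ 0 (equivalently, 2(x−x̃)ᵀM(Ax+Bu)e^{μt} − 2(x−x̃)ᵀM(Ax̃+Bu)e^{μt} + μ(x−x̃)ᵀM(x−x̃)e^{μt} ≤ 0). (Paper's Proposition 1: ψ is a time-varying control autobisimulation function of the nominal linear system dx* = (Ax* + Bu)dt.) -/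
open Matrix

/-- Paper's Proposition 1: `ψ(x, xx, t) = (x−xx)ᵀ M (x−xx) e^{μt}` is a time-varying control
autobisimulation function of the nominal linear system `dx* = (Ax* + Bu)dt`. -/
theorem stmt0 {n p : ℕ} (A : Matrix (Fin n) (Fin n) ℝ) (B : Matrix (Fin n) (Fin p) ℝ)
    (μ : ℝ) (M : Matrix (Fin n) (Fin n) ℝ) (hMsymm : M.IsSymm)
    (ψ : (Fin n → ℝ) → (Fin n → ℝ) → ℝ → ℝ)
    (hψ : ∀ (x xx : Fin n → ℝ) (t : ℝ),
      ψ x xx t = (x - xx) ⬝ᵥ (M *ᵥ (x - xx)) * Real.exp (μ * t))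
    (hMpd : M.PosDef)
    (hnsd : ∀ v : Fin n → ℝ, v ⬝ᵥ ((Aᵀ * M + M * A + μ • M) *ᵥ v) ≤ 0) :
    (∀ (x xx : Fin n → ℝ) (t : ℝ), x ≠ xx → 0 < ψ x xx t) ∧
    (∀ (x : Fin n → ℝ) (t : ℝ), ψ x x t = 0) ∧
    (∀ (x xx : Fin n → ℝ) (t : ℝ) (u : Fin p → ℝ),
      HasDerivAt
        (fun s : ℝ => ψ (x + s • (A *ᵥ x + B *ᵥ u)) (xx + s • (A *ᵥ xx + B *ᵥ u)) (t + s))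
        (2 * ((x - xx) ⬝ᵥ (M *ᵥ (A *ᵥ x + B *ᵥ u))) * Real.exp (μ * t)
          - 2 * ((x - xx) ⬝ᵥ (M *ᵥ (A *ᵥ xx + B *ᵥ u))) * Real.exp (μ * t)
          + μ * ((x - xx) ⬝ᵥ (M *ᵥ (x - xx))) * Real.exp (μ * t)) 0 ∧
      2 * ((x - xx) ⬝ᵥ (M *ᵥ (A *ᵥ x + B *ᵥ u))) * Real.exp (μ * t)
          - 2 * ((x - xx) ⬝ᵥ (M *ᵥ (A *ᵥ xx + B *ᵥ u))) * Real.exp (μ * t)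
          + μ * ((x - xx) ⬝ᵥ (M *ᵥ (x - xx))) * Real.exp (μ * t) ≤ 0) := by
  have hsym : ∀ v w : Fin n → ℝ, v ⬝ᵥ (M *ᵥ w) = w ⬝ᵥ (M *ᵥ v) := by
    intro v w
    rw [dotProduct_mulVec, ← Matrix.mulVec_transpose, hMsymm, dotProduct_comm]
  refine ⟨?_, ?_, ?_⟩
  · intro x xx t hne
    rw [hψ]
    have h1 : (0:ℝ) < (x - xx) ⬝ᵥ (M *ᵥ (x - xx)) := by
      simpa using hMpd.dotProduct_mulVec_pos (sub_ne_zero.mpr hne)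
    positivity
  · intro x t
    simp [hψ]
  · intro x xx t u
    set d : Fin n → ℝ := x - xx with hd
    set e : Fin n → ℝ := A *ᵥ d with he
    set a : ℝ := d ⬝ᵥ (M *ᵥ d) with ha
    set b : ℝ := d ⬝ᵥ (M *ᵥ e) with hb
    set c : ℝ := e ⬝ᵥ (M *ᵥ e) with hc
    -- key quadratic inequality
    have hbsum : 2 * b + μ * a ≤ 0 := by
      have h := hnsd d
      have h1 : d ⬝ᵥ ((Aᵀ * M) *ᵥ d) = b := by
        rw [← Matrix.mulVec_mulVec, dotProduct_mulVec, Matrix.vecMul_transpose, ← he,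
          hsym e d, hb]
      have h2 : d ⬝ᵥ ((M * A) *ᵥ d) = b := by
        rw [← Matrix.mulVec_mulVec, ← he, hb]
      have h3 : d ⬝ᵥ ((μ • M) *ᵥ d) = μ * a := by
        rw [Matrix.smul_mulVec, dotProduct_smul, smul_eq_mul, ha]
      rw [add_mulVec, add_mulVec, dotProduct_add, dotProduct_add, h1, h2, h3] at h
      linarith
    -- relate target coefficients to b
    have hM : (x - xx) ⬝ᵥ (M *ᵥ (A *ᵥ x + B *ᵥ u)) - (x - xx) ⬝ᵥ (M *ᵥ (A *ᵥ xx + B *ᵥ u)) = b := by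
      have hv : (A *ᵥ x + B *ᵥ u) - (A *ᵥ xx + B *ᵥ u) = A *ᵥ (x - xx) := by
        rw [Matrix.mulVec_sub]; abel
      rw [hb, he, hd, ← dotProduct_sub, ← Matrix.mulVec_sub, hv]
    have hDeq : 2 * ((x - xx) ⬝ᵥ (M *ᵥ (A *ᵥ x + B *ᵥ u))) * Real.exp (μ * t)
          - 2 * ((x - xx) ⬝ᵥ (M *ᵥ (A *ᵥ xx + B *ᵥ u))) * Real.exp (μ * t)
          + μ * ((x - xx) ⬝ᵥ (M *ᵥ (x - xx))) * Real.exp (μ * t)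
        = (2 * b + μ * a) * Real.exp (μ * t) := by
      rw [← hd, ← ha]
      linear_combination (2 * Real.exp (μ * t)) * hM
    constructor
    · -- derivative
      have harg : ∀ s : ℝ, (x + s • (A *ᵥ x + B *ᵥ u)) - (xx + s • (A *ᵥ xx + B *ᵥ u))
          = d + s • e := by
        intro s
        rw [he, hd, Matrix.mulVec_sub]
        module
      have key : (fun s : ℝ => ψ (x + s • (A *ᵥ x + B *ᵥ u)) (xx + s • (A *ᵥ xx + B *ᵥ u)) (t + s))
          = fun s : ℝ => (a + (2 * b) * s + c * s ^ 2) * Real.exp (μ * (t + s)) := by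
        funext s
        rw [hψ, harg s]
        simp only [dotProduct_add, add_dotProduct, Matrix.mulVec_add, Matrix.mulVec_smul,
          dotProduct_smul, smul_dotProduct, smul_eq_mul]
        rw [hsym e d, ← ha, ← hb, ← hc]
        ring
      rw [key, hDeq]
      have h1 : HasDerivAt (fun s : ℝ => a + (2 * b) * s + c * s ^ 2) (2 * b) 0 := by
        have := (((hasDerivAt_id (0:ℝ)).const_mul (2*b)).const_add a).add
          ((hasDerivAt_pow 2 (0:ℝ)).const_mul c)
        simpa [Pi.add_def] using this
      have hin : HasDerivAt (fun s : ℝ => μ * (t + s)) μ 0 := by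
        simpa using ((hasDerivAt_id (0:ℝ)).const_add t).const_mul μ
      have h2 : HasDerivAt (fun s : ℝ => Real.exp (μ * (t + s))) (μ * Real.exp (μ * t)) 0 := by
        simpa [mul_comm, Function.comp_def] using (Real.hasDerivAt_exp (μ * (t + 0))).comp 0 hin
      have := h1.mul h2
      simp only [Pi.mul_def] at this
      refine this.congr_deriv ?_
      simp
      ring
    · rw [hDeq]
      exact mul_nonpos_of_nonpos_of_nonneg hbsum (Real.exp_pos _).le
end

section
/- Let A be a real n×n matrix, B a real n×p matrix, u : ℝ → ℝᵖ continuous, M a real symmetric n×n matrix, and μ ∈ ℝ with AᵀM + MA + μM negative semidefinite. Suppose x, y : ℝ → ℝⁿ are differentiable with x′(t) = A x(t) + B u(t) and y′(t) = A y(t) + B u(t) for all t. Then for all t ≥ 0, (x(t) − y(t))ᵀ M (x(t) − y(t)) ≤ e^{−μt} · (x(0) − y(0))ᵀ M (x(0) − y(0)). In particular, if x(0) lies in the ellipsoid B_M(y(0), r) = {v : (y(0) − v)ᵀM(y(0) − v) ≤ r}, then x(t) ∈ B_M(y(t), r e^{−μt}) for all t ≥ 0. -/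
open Matrix

private lemma hasDerivAt_quad {n : ℕ} (M : Matrix (Fin n) (Fin n) ℝ)
    (e : ℝ → Fin n → ℝ) (e' : Fin n → ℝ) (t : ℝ) (he : HasDerivAt e e' t) :
    HasDerivAt (fun s => e s ⬝ᵥ (M *ᵥ e s))
      (e' ⬝ᵥ (M *ᵥ e t) + e t ⬝ᵥ (M *ᵥ e')) t := by
  have hcomp : ∀ i, HasDerivAt (fun s => e s i) (e' i) t := hasDerivAt_pi.1 he
  have key : ∀ i : Fin n, HasDerivAt (fun s => e s i * (∑ j, M i j * e s j))
      (e' i * (∑ j, M i j * e t j) + e t i * (∑ j, M i j * e' j)) t := by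
    intro i
    exact (hcomp i).mul (HasDerivAt.fun_sum fun j _ => (hcomp j).const_mul (M i j))
  have := HasDerivAt.fun_sum (fun i (_ : i ∈ Finset.univ) => key i)
  have heq : (fun s => ∑ i, e s i * (∑ j, M i j * e s j)) =
      (fun s => e s ⬝ᵥ (M *ᵥ e s)) := by
    funext s; simp [dotProduct, Matrix.mulVec, dotProduct]
  rw [heq] at this
  refine this.congr_deriv ?_
  rw [Finset.sum_add_distrib]
  simp [dotProduct, Matrix.mulVec, dotProduct]

/-- Contraction of the ellipsoidal deviation between two trajectories of the same linear
control system `x' = Ax + Bu(t)` under the LMI `AᵀM + MA + μM ⪯ 0`. -/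
theorem stmt2 {n p : ℕ} (A : Matrix (Fin n) (Fin n) ℝ) (B : Matrix (Fin n) (Fin p) ℝ)
    (u : ℝ → Fin p → ℝ) (hu : Continuous u)
    (M : Matrix (Fin n) (Fin n) ℝ) (hM : M.IsSymm) (μ : ℝ)
    (hnsd : ∀ v : Fin n → ℝ, v ⬝ᵥ ((Aᵀ * M + M * A + μ • M) *ᵥ v) ≤ 0)
    (x y : ℝ → Fin n → ℝ)
    (hx : ∀ t : ℝ, HasDerivAt x (A *ᵥ x t + B *ᵥ u t) t)
    (hy : ∀ t : ℝ, HasDerivAt y (A *ᵥ y t + B *ᵥ u t) t) :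
    (∀ t : ℝ, 0 ≤ t →
      (x t - y t) ⬝ᵥ (M *ᵥ (x t - y t)) ≤
        Real.exp (-(μ * t)) * ((x 0 - y 0) ⬝ᵥ (M *ᵥ (x 0 - y 0)))) ∧
    (∀ r : ℝ, x 0 ∈ {v : Fin n → ℝ | (y 0 - v) ⬝ᵥ (M *ᵥ (y 0 - v)) ≤ r} →
      ∀ t : ℝ, 0 ≤ t →
        x t ∈ {v : Fin n → ℝ | (y t - v) ⬝ᵥ (M *ᵥ (y t - v)) ≤ r * Real.exp (-(μ * t))}) := by
  set e : ℝ → Fin n → ℝ := fun t => x t - y t with he_def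
  have he : ∀ t, HasDerivAt e (A *ᵥ e t) t := by
    intro t
    have h := (hx t).fun_sub (hy t)
    simpa [he_def, Matrix.mulVec_sub, add_sub_add_right_eq_sub] using h
  set V : ℝ → ℝ := fun t => e t ⬝ᵥ (M *ᵥ e t) with hV_def
  have hV : ∀ t, HasDerivAt V ((A *ᵥ e t) ⬝ᵥ (M *ᵥ e t) + e t ⬝ᵥ (M *ᵥ (A *ᵥ e t))) t :=
    fun t => hasDerivAt_quad M e (A *ᵥ e t) t (he t)
  set g : ℝ → ℝ := fun t => Real.exp (μ * t) * V t with hg_def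
  have hg : ∀ t, HasDerivAt g
      (Real.exp (μ * t) * (μ * V t +
        ((A *ᵥ e t) ⬝ᵥ (M *ᵥ e t) + e t ⬝ᵥ (M *ᵥ (A *ᵥ e t))))) t := by
    intro t
    have hexp : HasDerivAt (fun s => Real.exp (μ * s)) (Real.exp (μ * t) * μ) t := by
      simpa [Function.comp_def] using (Real.hasDerivAt_exp (μ * t)).comp t
        ((hasDerivAt_id t).const_mul μ)
    have := hexp.fun_mul (hV t)
    refine this.congr_deriv ?_
    ring
  have hg' : ∀ t, Real.exp (μ * t) * (μ * V t +
      ((A *ᵥ e t) ⬝ᵥ (M *ᵥ e t) + e t ⬝ᵥ (M *ᵥ (A *ᵥ e t)))) ≤ 0 := by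
    intro t
    have h1 : (A *ᵥ e t) ⬝ᵥ (M *ᵥ e t) = e t ⬝ᵥ ((Aᵀ * M) *ᵥ e t) := by
      rw [← Matrix.mulVec_mulVec]
      conv_rhs => rw [Matrix.dotProduct_mulVec, Matrix.vecMul_transpose]
    have h2 : e t ⬝ᵥ (M *ᵥ (A *ᵥ e t)) = e t ⬝ᵥ ((M * A) *ᵥ e t) := by
      rw [Matrix.mulVec_mulVec]
    have h3 := hnsd (e t)
    rw [Matrix.add_mulVec, Matrix.add_mulVec, dotProduct_add, dotProduct_add,
      Matrix.smul_mulVec, dotProduct_smul] at h3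
    have h4 : μ * V t + ((A *ᵥ e t) ⬝ᵥ (M *ᵥ e t) + e t ⬝ᵥ (M *ᵥ (A *ᵥ e t))) ≤ 0 := by
      rw [h1, h2, hV_def]
      simp only [smul_eq_mul] at h3
      linarith
    exact mul_nonpos_of_nonneg_of_nonpos (Real.exp_pos _).le h4
  have hanti : Antitone g := antitone_of_hasDerivAt_nonpos hg hg'
  have main : ∀ t : ℝ, 0 ≤ t → V t ≤ Real.exp (-(μ * t)) * V 0 := by
    intro t ht
    have := hanti ht
    simp only [hg_def, mul_zero, Real.exp_zero, one_mul] at this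
    have hpos : (0:ℝ) < Real.exp (μ * t) := Real.exp_pos _
    rw [Real.exp_neg, inv_mul_eq_div, le_div_iff₀ hpos]
    linarith [this]
  constructor
  · exact main
  · intro r hr t ht
    have h0 : (y 0 - x 0) ⬝ᵥ (M *ᵥ (y 0 - x 0)) ≤ r := hr
    have hsym : ∀ s : ℝ, (y s - x s) ⬝ᵥ (M *ᵥ (y s - x s)) = V s := by
      intro s
      have : y s - x s = -(e s) := by simp [he_def]
      rw [this, Matrix.mulVec_neg, dotProduct_neg, neg_dotProduct, neg_neg]
    simp only [Set.mem_setOf_eq]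
    rw [hsym t]
    calc V t ≤ Real.exp (-(μ * t)) * V 0 := main t ht
      _ ≤ Real.exp (-(μ * t)) * r := by
          have : V 0 ≤ r := by rw [← hsym 0]; exact h0
          exact mul_le_mul_of_nonneg_left this (Real.exp_pos _).le
      _ = r * Real.exp (-(μ * t)) := mul_comm _ _
end

section
/- Let M be a real symmetric n×n matrix, a ∈ ℝⁿ, c ∈ ℝᵖ, z > 0, γ ≥ 0, r ≥ 0, b ∈ ℝ, μ ∈ ℝ, and t ≥ 0 with μ·t ≥ 0. Suppose z² a aᵀ ⪯ M. If ξ, ξ̃*, ξ* ∈ ℝⁿ and u ∈ ℝᵖ satisfy (ξ − ξ̃*)ᵀ M (ξ − ξ̃*) ≤ γ e^{−μt}, (ξ̃* − ξ*)ᵀ M (ξ̃* − ξ*) ≤ r e^{−μt}, and aᵀ ξ* + cᵀ u < b − (√γ + √r) e^{−μt/2} / z, then aᵀ ξ + cᵀ u < b. -/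
open Matrix

lemma quad_expand {n : ℕ} (M : Matrix (Fin n) (Fin n) ℝ) (a w : Fin n → ℝ) (z : ℝ) :
    w ⬝ᵥ ((M - z ^ 2 • vecMulVec a a) *ᵥ w)
      = w ⬝ᵥ (M *ᵥ w) - z ^ 2 * (a ⬝ᵥ w) ^ 2 := by
  rw [Matrix.sub_mulVec, dotProduct_sub, Matrix.smul_mulVec, dotProduct_smul]
  have : vecMulVec a a *ᵥ w = (a ⬝ᵥ w) • a := by
    ext i
    simp [Matrix.mulVec, vecMulVec, dotProduct, Finset.mul_sum, mul_comm, mul_left_comm]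
  rw [this, dotProduct_smul, smul_eq_mul, smul_eq_mul, dotProduct_comm w a]
  ring

lemma key_bound {n : ℕ} (M : Matrix (Fin n) (Fin n) ℝ) (a : Fin n → ℝ) (z γ μ t : ℝ)
    (hz : 0 < z) (hγ : 0 ≤ γ)
    (hpsd : ∀ w : Fin n → ℝ, 0 ≤ w ⬝ᵥ ((M - z ^ 2 • vecMulVec a a) *ᵥ w))
    (w : Fin n → ℝ) (h : w ⬝ᵥ (M *ᵥ w) ≤ γ * Real.exp (-(μ * t))) :
    z * (a ⬝ᵥ w) ≤ Real.sqrt γ * Real.exp (-(μ * t) / 2) := by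
  have hq := hpsd w
  rw [quad_expand] at hq
  have hE : (Real.exp (-(μ * t) / 2)) ^ 2 = Real.exp (-(μ * t)) := by
    rw [← Real.exp_nat_mul]; ring_nf
  have hsq : (z * (a ⬝ᵥ w)) ^ 2 ≤ (Real.sqrt γ * Real.exp (-(μ * t) / 2)) ^ 2 := by
    rw [mul_pow, mul_pow, hE, Real.sq_sqrt hγ]
    nlinarith [hq, h]
  have hnn : 0 ≤ Real.sqrt γ * Real.exp (-(μ * t) / 2) :=
    mul_nonneg (Real.sqrt_nonneg _) (Real.exp_pos _).le
  nlinarith [abs_le_of_sq_le_sq' hsq hnn]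

/-- Deterministic core of the paper's Theorem 1: satisfaction of the robustly modified
predicate by the nominal point, together with the two time-decaying ellipsoidal deviation
bounds, implies satisfaction of the original predicate `aᵀξ + cᵀu < b` by the stochastic
trajectory point. -/
theorem stmt5 {n p : ℕ} (M : Matrix (Fin n) (Fin n) ℝ) (hM : M.IsSymm)
    (a : Fin n → ℝ) (c : Fin p → ℝ) (z γ r b μ t : ℝ)
    (hz : 0 < z) (hγ : 0 ≤ γ) (hr : 0 ≤ r) (ht : 0 ≤ t) (hμt : 0 ≤ μ * t)
    (hpsd : ∀ w : Fin n → ℝ, 0 ≤ w ⬝ᵥ ((M - z ^ 2 • vecMulVec a a) *ᵥ w))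
    (ξ ξps ξs : Fin n → ℝ) (u : Fin p → ℝ)
    (h1 : (ξ - ξps) ⬝ᵥ (M *ᵥ (ξ - ξps)) ≤ γ * Real.exp (-(μ * t)))
    (h2 : (ξps - ξs) ⬝ᵥ (M *ᵥ (ξps - ξs)) ≤ r * Real.exp (-(μ * t)))
    (h3 : a ⬝ᵥ ξs + c ⬝ᵥ u <
      b - (Real.sqrt γ + Real.sqrt r) * Real.exp (-(μ * t) / 2) / z) :
    a ⬝ᵥ ξ + c ⬝ᵥ u < b := by
  have k1 := key_bound M a z γ μ t hz hγ hpsd _ h1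
  have k2 := key_bound M a z r μ t hz hr hpsd _ h2
  have hd1 : a ⬝ᵥ (ξ - ξps) = a ⬝ᵥ ξ - a ⬝ᵥ ξps := dotProduct_sub a ξ ξps
  have hd2 : a ⬝ᵥ (ξps - ξs) = a ⬝ᵥ ξps - a ⬝ᵥ ξs := dotProduct_sub a ξps ξs
  rw [hd1] at k1
  rw [hd2] at k2
  have hb : b - (Real.sqrt γ + Real.sqrt r) * Real.exp (-(μ * t) / 2) / z
      = (b * z - (Real.sqrt γ + Real.sqrt r) * Real.exp (-(μ * t) / 2)) / z := by
    field_simp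
  rw [hb, lt_div_iff₀ hz] at h3
  nlinarith [h3, k1, k2, hz]
end

section
/- Let M₁, M₂ be real symmetric n×n matrices, A₁ a real n×n matrix, B₁ a real n×p matrix, u : ℝ → ℝᵖ continuous, μ₁ ∈ ℝ with A₁ᵀM₁ + M₁A₁ + μ₁M₁ negative semidefinite, T₁ ≥ 0, and r₁, r₂ ≥ 0. Let x*, x̃ : ℝ → ℝⁿ be differentiable with x*′(t) = A₁x*(t) + B₁u(t) and x̃′(t) = A₁x̃(t) + B₁u(t) for all t, and suppose x̃(0) ∈ B_{M₁}(x*(0), r₁). If the ellipsoid inclusion B_{M₁}(x*(T₁), r₁ e^{−μ₁T₁}) ⊆ B_{M₂}(x₂*, r₂) holds for some x₂* ∈ ℝⁿ, then x̃(T₁) ∈ B_{M₂}(x₂*, r₂). -/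
open Matrix

/-- Mode-switching propagation step in the proof of the paper's Theorem 1: within one mode,
initial deviations in `B_{M₁}(x*(0), r₁)` contract to `B_{M₁}(x*(T₁), r₁e^{−μ₁T₁})` after
dwell time `T₁`, and the assumed ellipsoid inclusion transfers the perturbed state into the
next mode's ball `B_{M₂}(x₂*, r₂)`. -/
theorem stmt12 {n p : ℕ} (M₁ M₂ : Matrix (Fin n) (Fin n) ℝ)
    (hM₁ : M₁.IsSymm) (hM₂ : M₂.IsSymm)
    (A₁ : Matrix (Fin n) (Fin n) ℝ) (B₁ : Matrix (Fin n) (Fin p) ℝ)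
    (u : ℝ → Fin p → ℝ) (hu : Continuous u) (μ₁ : ℝ)
    (hnsd : ∀ v : Fin n → ℝ, v ⬝ᵥ ((A₁ᵀ * M₁ + M₁ * A₁ + μ₁ • M₁) *ᵥ v) ≤ 0)
    (T₁ r₁ r₂ : ℝ) (hT₁ : 0 ≤ T₁) (hr₁ : 0 ≤ r₁) (hr₂ : 0 ≤ r₂)
    (xs xp : ℝ → Fin n → ℝ)
    (hxs : ∀ t : ℝ, HasDerivAt xs (A₁ *ᵥ xs t + B₁ *ᵥ u t) t)
    (hxp : ∀ t : ℝ, HasDerivAt xp (A₁ *ᵥ xp t + B₁ *ᵥ u t) t)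
    (hinit : xp 0 ∈ {v : Fin n → ℝ | (xs 0 - v) ⬝ᵥ (M₁ *ᵥ (xs 0 - v)) ≤ r₁})
    (x₂ : Fin n → ℝ)
    (hincl : {v : Fin n → ℝ |
        (xs T₁ - v) ⬝ᵥ (M₁ *ᵥ (xs T₁ - v)) ≤ r₁ * Real.exp (-(μ₁ * T₁))} ⊆
      {v : Fin n → ℝ | (x₂ - v) ⬝ᵥ (M₂ *ᵥ (x₂ - v)) ≤ r₂}) :
    xp T₁ ∈ {v : Fin n → ℝ | (x₂ - v) ⬝ᵥ (M₂ *ᵥ (x₂ - v)) ≤ r₂} := by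
  set e : ℝ → Fin n → ℝ := fun t => xs t - xp t with he
  have hde : ∀ t, HasDerivAt e (A₁ *ᵥ e t) t := by
    intro t
    have h := (hxs t).sub (hxp t)
    have : (A₁ *ᵥ xs t + B₁ *ᵥ u t) - (A₁ *ᵥ xp t + B₁ *ᵥ u t) = A₁ *ᵥ e t := by
      simp [he, mulVec_sub]
    rwa [this] at h
  set V : ℝ → ℝ := fun t => e t ⬝ᵥ (M₁ *ᵥ e t) with hV
  have hdV : ∀ t, HasDerivAt V
      ((A₁ *ᵥ e t) ⬝ᵥ (M₁ *ᵥ e t) + e t ⬝ᵥ (M₁ *ᵥ (A₁ *ᵥ e t))) t := by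
    intro t
    have hcoord : ∀ i, HasDerivAt (fun s => e s i) ((A₁ *ᵥ e t) i) t :=
      fun i => hasDerivAt_pi.1 (hde t) i
    have hMe : ∀ i, HasDerivAt (fun s => (M₁ *ᵥ e s) i) ((M₁ *ᵥ (A₁ *ᵥ e t)) i) t := by
      intro i
      simp only [mulVec, dotProduct]
      exact HasDerivAt.fun_sum fun j _ => (hcoord j).const_mul (M₁ i j)
    have : HasDerivAt (fun s => ∑ i, e s i * (M₁ *ᵥ e s) i)
        (∑ i, ((A₁ *ᵥ e t) i * (M₁ *ᵥ e t) i + e t i * (M₁ *ᵥ (A₁ *ᵥ e t)) i)) t :=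
      HasDerivAt.fun_sum fun i _ => (hcoord i).mul (hMe i)
    simpa [hV, dotProduct, Finset.sum_add_distrib] using this
  set W : ℝ → ℝ := fun t => V t * Real.exp (μ₁ * t) with hW
  have hdW : ∀ t, HasDerivAt W
      (((A₁ *ᵥ e t) ⬝ᵥ (M₁ *ᵥ e t) + e t ⬝ᵥ (M₁ *ᵥ (A₁ *ᵥ e t)) + μ₁ * V t) *
        Real.exp (μ₁ * t)) t := by
    intro t
    have hexp : HasDerivAt (fun s => Real.exp (μ₁ * s)) (μ₁ * Real.exp (μ₁ * t)) t := by
      simpa [mul_comm, Function.comp_def] using (Real.hasDerivAt_exp (μ₁ * t)).comp t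
        ((hasDerivAt_id t).const_mul μ₁)
    have := (hdV t).mul hexp
    exact this.congr_deriv (by ring)
  have hWderiv_nonpos : ∀ t, deriv W t ≤ 0 := by
    intro t
    rw [(hdW t).deriv]
    have hkey : (A₁ *ᵥ e t) ⬝ᵥ (M₁ *ᵥ e t) + e t ⬝ᵥ (M₁ *ᵥ (A₁ *ᵥ e t)) + μ₁ * V t
        = e t ⬝ᵥ ((A₁ᵀ * M₁ + M₁ * A₁ + μ₁ • M₁) *ᵥ e t) := by
      have h1 : (A₁ *ᵥ e t) ⬝ᵥ (M₁ *ᵥ e t) = e t ⬝ᵥ ((A₁ᵀ * M₁) *ᵥ e t) := by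
        rw [← mulVec_mulVec]
        conv_rhs => rw [dotProduct_mulVec, vecMul_transpose]
      have h2 : e t ⬝ᵥ (M₁ *ᵥ (A₁ *ᵥ e t)) = e t ⬝ᵥ ((M₁ * A₁) *ᵥ e t) := by
        rw [mulVec_mulVec]
      rw [h1, h2, hV]
      simp [add_mulVec, smul_mulVec, dotProduct_add, dotProduct_smul, smul_eq_mul]
    rw [hkey]
    exact mul_nonpos_of_nonpos_of_nonneg (hnsd (e t)) (Real.exp_nonneg _)
  have hWanti : ∀ s t : ℝ, s ≤ t → W t ≤ W s := by
    intro s t hst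
    have hdiff : Differentiable ℝ W := fun t => (hdW t).differentiableAt
    exact antitone_of_deriv_nonpos hdiff hWderiv_nonpos hst
  have hVT : V T₁ ≤ r₁ * Real.exp (-(μ₁ * T₁)) := by
    have hW0 : W 0 = V 0 := by simp [hW]
    have h1 : W T₁ ≤ W 0 := hWanti 0 T₁ hT₁
    have h2 : V 0 ≤ r₁ := hinit
    have h3 : W T₁ ≤ r₁ := by rw [hW0] at h1; linarith
    have h4 : V T₁ = W T₁ * Real.exp (-(μ₁ * T₁)) := by
      rw [hW]
      simp [mul_assoc, ← Real.exp_add]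
    rw [h4]
    exact mul_le_mul_of_nonneg_right h3 (Real.exp_nonneg _)
  exact hincl hVT
end
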